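/- Let F, G : ℝ → ℝ be three times continuously differentiable. For x ≠ 0 and T > 0 define B(x,T) = x · ( F(1/x + 3 T^{1/3}) + G(1/x − 3 T^{1/3}) + 3 T^{1/3} · ( G'(1/x − 3 T^{1/3}) − F'(1/x + 3 T^{1/3}) ) ). Then B satisfies the wave equation ∂²B/∂T²(x,T) = T^{−4/3} · x⁴ · ∂²B/∂x²(x,T) for all x ≠ 0 and all T > 0. -/

import Mathlib

/-- First partial derivative with respect to the first argument. -/
noncomputable def pdx (u : ℝ × ℝ → ℝ) : ℝ × ℝ → ℝ :=
  fun p => deriv (fun x => u (x, p.2)) p.1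

/-- First partial derivative with respect to the second argument. -/
noncomputable def pdt (u : ℝ × ℝ → ℝ) : ℝ × ℝ → ℝ :=
  fun p => deriv (fun t => u (p.1, t)) p.2

private lemma diff3 {F : ℝ → ℝ} (hF : ContDiff ℝ 3 F) :
    Differentiable ℝ F ∧ Differentiable ℝ (deriv F) ∧ Differentiable ℝ (deriv (deriv F)) := by
  have h3 : ContDiff ℝ ((2:ℕ)+1) F := by exact_mod_cast hF
  have h2 := (contDiff_succ_iff_deriv.mp h3).2.2
  have h2' : ContDiff ℝ ((1:ℕ)+1) (deriv F) := by exact_mod_cast h2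
  have h1 := (contDiff_succ_iff_deriv.mp h2').2.2
  exact ⟨hF.differentiable (by norm_num), h2.differentiable (by norm_num),
    h1.differentiable (by norm_num)⟩

private lemma comp_hd {φ g : ℝ → ℝ} (hφ : Differentiable ℝ φ) {g' t : ℝ}
    (hg : HasDerivAt g g' t) :
    HasDerivAt (fun τ => φ (g τ)) (deriv φ (g t) * g') t :=
  ((hφ (g t)).hasDerivAt).comp t hg

private lemma hd_cbrt {t : ℝ} (ht : 0 < t) :
    HasDerivAt (fun τ : ℝ => 3 * τ ^ ((1:ℝ)/3)) (t ^ (-(2:ℝ)/3)) t := by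
  have h := (Real.hasDerivAt_rpow_const (p := (1:ℝ)/3) (Or.inl ht.ne')).const_mul (3:ℝ)
  refine h.congr_deriv ?_
  rw [show (1:ℝ)/3 - 1 = -(2:ℝ)/3 by norm_num]
  ring

private lemma hd_ncbrt {t : ℝ} (ht : 0 < t) :
    HasDerivAt (fun τ : ℝ => τ ^ (-(1:ℝ)/3)) (-(1:ℝ)/3 * t ^ (-(4:ℝ)/3)) t := by
  have h := Real.hasDerivAt_rpow_const (p := -(1:ℝ)/3) (x := t) (Or.inl ht.ne')
  convert h using 2
  norm_num

private lemma hd_inv {y : ℝ} (hy : y ≠ 0) :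
    HasDerivAt (fun y' : ℝ => 1 / y') (-(1/y^2)) y := by
  simpa [one_div] using hasDerivAt_inv hy

theorem stmt_17 (F G : ℝ → ℝ) (hF : ContDiff ℝ 3 F) (hG : ContDiff ℝ 3 G)
    (B : ℝ × ℝ → ℝ)
    (hB : ∀ x T : ℝ, x ≠ 0 → 0 < T →
      B (x, T) = x *
        (F (1 / x + 3 * T ^ ((1 : ℝ) / 3)) + G (1 / x - 3 * T ^ ((1 : ℝ) / 3))
          + 3 * T ^ ((1 : ℝ) / 3) *
            (deriv G (1 / x - 3 * T ^ ((1 : ℝ) / 3))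
              - deriv F (1 / x + 3 * T ^ ((1 : ℝ) / 3))))) :
    ∀ x T : ℝ, x ≠ 0 → 0 < T →
      pdt (pdt B) (x, T)
        = T ^ (-(4 : ℝ) / 3) * x ^ 4 * pdx (pdx B) (x, T) := by
  obtain ⟨hF1, hF2, hF3⟩ := diff3 hF
  obtain ⟨hG1, hG2, hG3⟩ := diff3 hG
  intro x T hx hT
  -- abbreviations for first t-derivative
  -- Step 1: first t-derivative, valid for all x' ≠ 0, t > 0
  have haux1 : ∀ x' t : ℝ, x' ≠ 0 → 0 < t →
      pdt B (x', t) = (-3 * x') * (t ^ (-(1:ℝ)/3) *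
        (deriv (deriv G) (1 / x' - 3 * t ^ ((1:ℝ)/3))
          + deriv (deriv F) (1 / x' + 3 * t ^ ((1:ℝ)/3)))) := by
    intro x' t hx' ht
    have hev : (fun τ => B (x', τ)) =ᶠ[nhds t]
        (fun τ => x' * (F (1 / x' + 3 * τ ^ ((1:ℝ)/3)) + G (1 / x' - 3 * τ ^ ((1:ℝ)/3))
          + 3 * τ ^ ((1:ℝ)/3) * (deriv G (1 / x' - 3 * τ ^ ((1:ℝ)/3))
            - deriv F (1 / x' + 3 * τ ^ ((1:ℝ)/3))))) := by
      filter_upwards [Ioi_mem_nhds ht] with τ hτ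
      exact hB x' τ hx' hτ
    have hs := hd_cbrt ht
    have hu : HasDerivAt (fun τ : ℝ => 1 / x' + 3 * τ ^ ((1:ℝ)/3)) (t ^ (-(2:ℝ)/3)) t :=
      hs.const_add _
    have hv : HasDerivAt (fun τ : ℝ => 1 / x' - 3 * τ ^ ((1:ℝ)/3)) (-(t ^ (-(2:ℝ)/3))) t :=
      hs.const_sub _
    have hFu := comp_hd hF1 hu
    have hGv := comp_hd hG1 hv
    have hF'u := comp_hd hF2 hu
    have hG'v := comp_hd hG2 hv
    have hmul := hs.mul (hG'v.sub hF'u)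
    have htot := ((hFu.add hGv).add hmul).const_mul x'
    have hder : deriv (fun τ => B (x', τ)) t = _ := hev.deriv_eq.trans htot.deriv
    have hpdt : pdt B (x', t) = deriv (fun τ => B (x', τ)) t := rfl
    rw [hpdt, hder]
    simp only [Pi.add_apply, Pi.sub_apply, Pi.mul_apply]
    have e1 : t ^ ((1:ℝ)/3) * t ^ (-(2:ℝ)/3) = t ^ (-(1:ℝ)/3) := by
      rw [← Real.rpow_add ht]; norm_num
    set uu := 1 / x' + 3 * t ^ ((1:ℝ)/3)
    set vv := 1 / x' - 3 * t ^ ((1:ℝ)/3)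
    have : x' * (deriv F uu * t ^ (-(2:ℝ)/3) + deriv G vv * -(t ^ (-(2:ℝ)/3))
        + (t ^ (-(2:ℝ)/3) * (deriv G vv - deriv F uu)
          + 3 * t ^ ((1:ℝ)/3) * (deriv (deriv G) vv * -(t ^ (-(2:ℝ)/3))
            - deriv (deriv F) uu * t ^ (-(2:ℝ)/3))))
        = (-3 * x') * ((t ^ ((1:ℝ)/3) * t ^ (-(2:ℝ)/3)) * (deriv (deriv G) vv + deriv (deriv F) uu)) := by
      ring
    rw [this, e1]
  -- Step 2: second t-derivative at (x, T)
  have hev2 : (fun τ => pdt B (x, τ)) =ᶠ[nhds T]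
      (fun τ => (-3 * x) * (τ ^ (-(1:ℝ)/3) *
        (deriv (deriv G) (1 / x - 3 * τ ^ ((1:ℝ)/3))
          + deriv (deriv F) (1 / x + 3 * τ ^ ((1:ℝ)/3))))) := by
    filter_upwards [Ioi_mem_nhds hT] with τ hτ
    exact haux1 x τ hx hτ
  have hs := hd_cbrt hT
  have hu : HasDerivAt (fun τ : ℝ => 1 / x + 3 * τ ^ ((1:ℝ)/3)) (T ^ (-(2:ℝ)/3)) T :=
    hs.const_add _
  have hv : HasDerivAt (fun τ : ℝ => 1 / x - 3 * τ ^ ((1:ℝ)/3)) (-(T ^ (-(2:ℝ)/3))) T :=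
    hs.const_sub _
  have hF''u := comp_hd hF3 hu
  have hG''v := comp_hd hG3 hv
  have htot2 := (((hd_ncbrt hT).mul (hG''v.add hF''u)).const_mul (-3 * x))
  have hLHS := (show pdt (pdt B) (x, T) = deriv (fun τ => pdt B (x, τ)) T from rfl).trans
    (hev2.deriv_eq.trans htot2.deriv)
  -- Step 3: first x-derivative at (y, T), y ≠ 0
  have haux_x : ∀ y : ℝ, y ≠ 0 →
      pdx B (y, T) = (F (1 / y + 3 * T ^ ((1:ℝ)/3)) + G (1 / y - 3 * T ^ ((1:ℝ)/3))
          + 3 * T ^ ((1:ℝ)/3) * (deriv G (1 / y - 3 * T ^ ((1:ℝ)/3))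
            - deriv F (1 / y + 3 * T ^ ((1:ℝ)/3))))
        - 1 / y * (deriv F (1 / y + 3 * T ^ ((1:ℝ)/3)) + deriv G (1 / y - 3 * T ^ ((1:ℝ)/3)))
        - 3 * T ^ ((1:ℝ)/3) * (1 / y * (deriv (deriv G) (1 / y - 3 * T ^ ((1:ℝ)/3))
            - deriv (deriv F) (1 / y + 3 * T ^ ((1:ℝ)/3)))) := by
    intro y hy
    have hev : (fun y' => B (y', T)) =ᶠ[nhds y]
        (fun y' => y' * (F (1 / y' + 3 * T ^ ((1:ℝ)/3)) + G (1 / y' - 3 * T ^ ((1:ℝ)/3))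
          + 3 * T ^ ((1:ℝ)/3) * (deriv G (1 / y' - 3 * T ^ ((1:ℝ)/3))
            - deriv F (1 / y' + 3 * T ^ ((1:ℝ)/3))))) := by
      filter_upwards [isOpen_compl_singleton.mem_nhds (show y ∈ ({(0:ℝ)}ᶜ : Set ℝ) from hy)]
        with y' hy'
      exact hB y' T hy' hT
    have hi := hd_inv hy
    have hu : HasDerivAt (fun y' : ℝ => 1 / y' + 3 * T ^ ((1:ℝ)/3)) (-(1/y^2)) y :=
      hi.add_const _
    have hv : HasDerivAt (fun y' : ℝ => 1 / y' - 3 * T ^ ((1:ℝ)/3)) (-(1/y^2)) y :=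
      hi.sub_const _
    have hFu := comp_hd hF1 hu
    have hGv := comp_hd hG1 hv
    have hF'u := comp_hd hF2 hu
    have hG'v := comp_hd hG2 hv
    have hA := (hFu.add hGv).add ((hG'v.sub hF'u).const_mul (3 * T ^ ((1:ℝ)/3)))
    have htot := (hasDerivAt_id y).mul hA
    have hpdx : pdx B (y, T) = deriv (fun y' => B (y', T)) y := rfl
    rw [hpdx, hev.deriv_eq.trans htot.deriv]
    simp only [Pi.add_apply, Pi.sub_apply, Pi.mul_apply, id_eq]
    set uu := 1 / y + 3 * T ^ ((1:ℝ)/3)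
    set vv := 1 / y - 3 * T ^ ((1:ℝ)/3)
    field_simp
    ring
  -- Step 4: second x-derivative at (x, T)
  have hev3 : (fun y => pdx B (y, T)) =ᶠ[nhds x]
      (fun y => (F (1 / y + 3 * T ^ ((1:ℝ)/3)) + G (1 / y - 3 * T ^ ((1:ℝ)/3))
          + 3 * T ^ ((1:ℝ)/3) * (deriv G (1 / y - 3 * T ^ ((1:ℝ)/3))
            - deriv F (1 / y + 3 * T ^ ((1:ℝ)/3))))
        - 1 / y * (deriv F (1 / y + 3 * T ^ ((1:ℝ)/3)) + deriv G (1 / y - 3 * T ^ ((1:ℝ)/3)))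
        - 3 * T ^ ((1:ℝ)/3) * (1 / y * (deriv (deriv G) (1 / y - 3 * T ^ ((1:ℝ)/3))
            - deriv (deriv F) (1 / y + 3 * T ^ ((1:ℝ)/3))))) := by
    filter_upwards [isOpen_compl_singleton.mem_nhds (show x ∈ ({(0:ℝ)}ᶜ : Set ℝ) from hx)]
      with y hy
    exact haux_x y hy
  have hi := hd_inv hx
  have hux : HasDerivAt (fun y' : ℝ => 1 / y' + 3 * T ^ ((1:ℝ)/3)) (-(1/x^2)) x :=
    hi.add_const _
  have hvx : HasDerivAt (fun y' : ℝ => 1 / y' - 3 * T ^ ((1:ℝ)/3)) (-(1/x^2)) x :=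
    hi.sub_const _
  have hFu := comp_hd hF1 hux
  have hGv := comp_hd hG1 hvx
  have hF'u := comp_hd hF2 hux
  have hG'v := comp_hd hG2 hvx
  have hF''u := comp_hd hF3 hux
  have hG''v := comp_hd hG3 hvx
  have hA := (hFu.add hGv).add ((hG'v.sub hF'u).const_mul (3 * T ^ ((1:ℝ)/3)))
  have hB2 := hi.mul (hF'u.add hG'v)
  have hC2 := (hi.mul (hG''v.sub hF''u)).const_mul (3 * T ^ ((1:ℝ)/3))
  have htot3 := (hA.sub hB2).sub hC2
  have hRHS := (show pdx (pdx B) (x, T) = deriv (fun y => pdx B (y, T)) x from rfl).trans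
    (hev3.deriv_eq.trans htot3.deriv)
  rw [hLHS, hRHS]
  simp only [Pi.add_apply, Pi.sub_apply, Pi.mul_apply]
  set uu := 1 / x + 3 * T ^ ((1:ℝ)/3) with huu
  set vv := 1 / x - 3 * T ^ ((1:ℝ)/3) with hvv
  have eA : T ^ (-(1:ℝ)/3) * T ^ (-(2:ℝ)/3) = T ^ (-(4:ℝ)/3) * T ^ ((1:ℝ)/3) := by
    rw [← Real.rpow_add hT, ← Real.rpow_add hT]; norm_num
  have hxi : x⁻¹ * x = 1 := inv_mul_cancel₀ hx
  linear_combination (3 * x * (deriv (deriv (deriv G)) vv - deriv (deriv (deriv F)) uu)) * eA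
    + (-x * ((x⁻¹ * x) ^ 2 + x⁻¹ * x + 1) * T ^ (-(4:ℝ)/3) *
        (deriv (deriv G) vv + deriv (deriv F) uu
          + 3 * T ^ ((1:ℝ)/3) * (deriv (deriv (deriv G)) vv - deriv (deriv (deriv F)) uu))) * hxi
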